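/- Let H be a Hopf algebra. If H₁=H⊗H (with structures h▷(k⊗l)=hk⊗l, (k⊗l)◁h=k⊗S(h₁)lh₂, ρˡ(k⊗l)=k₁S(k₃)⊗(k₂⊗l), ρʳ(k⊗l)=(k⊗l₁)⊗l₂) satisfies the u-condition m₍₋₁₎▷m₍₀₎₍₀₎◁m₍₀₎₍₁₎=m, then S²=id. (Proof route: the u-condition at k⊗1 gives k₁S(k₃)k₂=k for all k, which implies S(k₂)k₁=ε(k)1, hence S²=id.) -/
import Mathlib


noncomputable section
open TensorProduct

namespace YDL

variable (K : Type) [Field K] (H : Type) [Ring H] [HopfAlgebra K H]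

abbrev mu : H ⊗[K] H →ₗ[K] H := LinearMap.mul' K H
abbrev cm : H →ₗ[K] H ⊗[K] H := Coalgebra.comul
abbrev cu : H →ₗ[K] K := Coalgebra.counit
abbrev sa : H →ₗ[K] H := HopfAlgebra.antipode (R := K)
abbrev eta : K →ₗ[K] H := Algebra.linearMap K H

/-- Yetter–Drinfel'd–Long bimodule over `H` (Definition 2.1). -/
structure IsYDLong (M : Type) [AddCommGroup M] [Module K M]
    (lact : H ⊗[K] M →ₗ[K] M) (ract : M ⊗[K] H →ₗ[K] M)
    (lcoact : M →ₗ[K] H ⊗[K] M) (rcoact : M →ₗ[K] M ⊗[K] H) : Prop where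
  lact_one : ∀ m : M, lact (1 ⊗ₜ m) = m
  lact_mul : ∀ (g h : H) (m : M), lact ((g * h) ⊗ₜ m) = lact (g ⊗ₜ lact (h ⊗ₜ m))
  ract_one : ∀ m : M, ract (m ⊗ₜ 1) = m
  ract_mul : ∀ (m : M) (g h : H), ract (m ⊗ₜ (g * h)) = ract (ract (m ⊗ₜ g) ⊗ₜ h)
  bimod : ∀ (h : H) (m : M) (g : H),
    ract (lact (h ⊗ₜ m) ⊗ₜ g) = lact (h ⊗ₜ ract (m ⊗ₜ g))
  lcoassoc : (TensorProduct.assoc K H H M).toLinearMap ∘ₗ (cm K H).rTensor M ∘ₗ lcoact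
      = lcoact.lTensor H ∘ₗ lcoact
  lcounit : (TensorProduct.lid K M).toLinearMap ∘ₗ (cu K H).rTensor M ∘ₗ lcoact
      = LinearMap.id
  rcoassoc : (TensorProduct.assoc K M H H).toLinearMap ∘ₗ rcoact.rTensor H ∘ₗ rcoact
      = (cm K H).lTensor M ∘ₗ rcoact
  rcounit : (TensorProduct.rid K M).toLinearMap ∘ₗ (cu K H).lTensor M ∘ₗ rcoact
      = LinearMap.id
  bicomod : rcoact.lTensor H ∘ₗ lcoact
      = (TensorProduct.assoc K H M H).toLinearMap ∘ₗ lcoact.rTensor H ∘ₗ rcoact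
  yd23 : (mu K H).rTensor M ∘ₗ (TensorProduct.comm K H H).toLinearMap.rTensor M
        ∘ₗ (TensorProduct.assoc K H H M).symm.toLinearMap ∘ₗ lcoact.lTensor H ∘ₗ lact.lTensor H
        ∘ₗ (TensorProduct.assoc K H H M).toLinearMap
        ∘ₗ (TensorProduct.comm K H H).toLinearMap.rTensor M ∘ₗ (cm K H).rTensor M
      = TensorProduct.map (mu K H) lact
        ∘ₗ (tensorTensorTensorComm K H H H M).toLinearMap
        ∘ₗ TensorProduct.map (cm K H) lcoact
  long24 : rcoact ∘ₗ lact
      = lact.rTensor H ∘ₗ (TensorProduct.assoc K H M H).symm.toLinearMap ∘ₗ rcoact.lTensor H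
  yd25 : (mu K H).lTensor M ∘ₗ (TensorProduct.comm K H H).toLinearMap.lTensor M
        ∘ₗ (TensorProduct.assoc K M H H).toLinearMap ∘ₗ rcoact.rTensor H ∘ₗ ract.rTensor H
        ∘ₗ (TensorProduct.assoc K M H H).symm.toLinearMap
        ∘ₗ (TensorProduct.comm K H H).toLinearMap.lTensor M ∘ₗ (cm K H).lTensor M
      = TensorProduct.map ract (mu K H)
        ∘ₗ (tensorTensorTensorComm K M H H H).toLinearMap
        ∘ₗ TensorProduct.map rcoact (cm K H)
  long26 : lcoact ∘ₗ ract
      = ract.lTensor H ∘ₗ (TensorProduct.assoc K H M H).toLinearMap ∘ₗ lcoact.rTensor H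

/-- The braiding `ψ_{M,N}(m ⊗ n) = m₍₋₁₎ ▷ n₍₀₎ ⊗ m₍₀₎ ◁ n₍₁₎`. -/
def braid {M N : Type} [AddCommGroup M] [Module K M] [AddCommGroup N] [Module K N]
    (lcoactM : M →ₗ[K] H ⊗[K] M) (ractM : M ⊗[K] H →ₗ[K] M)
    (lactN : H ⊗[K] N →ₗ[K] N) (rcoactN : N →ₗ[K] N ⊗[K] H) :
    M ⊗[K] N →ₗ[K] N ⊗[K] M :=
  TensorProduct.map lactN ractM ∘ₗ (tensorTensorTensorComm K H M N H).toLinearMap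
    ∘ₗ TensorProduct.map lcoactM rcoactN

/-- The inverse braiding `ψ⁻¹_{N,M}(n ⊗ m) = m₍₀₎ ◁ S⁻¹(n₍₁₎) ⊗ S⁻¹(m₍₋₁₎) ▷ n₍₀₎`,
where `Si` is the (given) inverse of the antipode. -/
def braidInv (Si : H →ₗ[K] H) {M N : Type}
    [AddCommGroup M] [Module K M] [AddCommGroup N] [Module K N]
    (lcoactM : M →ₗ[K] H ⊗[K] M) (ractM : M ⊗[K] H →ₗ[K] M)
    (lactN : H ⊗[K] N →ₗ[K] N) (rcoactN : N →ₗ[K] N ⊗[K] H) :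
    N ⊗[K] M →ₗ[K] M ⊗[K] N :=
  TensorProduct.map ractM lactN
    ∘ₗ (TensorProduct.comm K (H ⊗[K] N) (M ⊗[K] H)).toLinearMap
    ∘ₗ (tensorTensorTensorComm K H M N H).toLinearMap
    ∘ₗ (TensorProduct.comm K (N ⊗[K] H) (H ⊗[K] M)).toLinearMap
    ∘ₗ TensorProduct.map (Si.lTensor N ∘ₗ rcoactN) (Si.rTensor M ∘ₗ lcoactM)

/-! Structure maps of `H₁, H₂, H₃, H₄` from Example 2.4. -/

/-- `h ▷ (k ⊗ l) = hk ⊗ l`. -/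
def lactA : H ⊗[K] (H ⊗[K] H) →ₗ[K] H ⊗[K] H :=
  (mu K H).rTensor H ∘ₗ (TensorProduct.assoc K H H H).symm.toLinearMap

/-- `l ⊗ h ↦ S(h₁) l h₂`. -/
def adR : H ⊗[K] H →ₗ[K] H :=
  mu K H ∘ₗ (mu K H ∘ₗ (sa K H).rTensor H ∘ₗ (TensorProduct.comm K H H).toLinearMap).rTensor H
    ∘ₗ (TensorProduct.assoc K H H H).symm.toLinearMap ∘ₗ (cm K H).lTensor H

/-- `(k ⊗ l) ◁ h = k ⊗ S(h₁) l h₂`. -/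
def ractA : (H ⊗[K] H) ⊗[K] H →ₗ[K] H ⊗[K] H :=
  (adR K H).lTensor H ∘ₗ (TensorProduct.assoc K H H H).toLinearMap

/-- `k ↦ k₁ S(k₃) ⊗ k₂`. -/
def c1 : H →ₗ[K] H ⊗[K] H :=
  (mu K H).rTensor H ∘ₗ (TensorProduct.assoc K H H H).symm.toLinearMap
    ∘ₗ ((sa K H).rTensor H ∘ₗ (TensorProduct.comm K H H).toLinearMap).lTensor H
    ∘ₗ (cm K H).lTensor H ∘ₗ cm K H

/-- `ρˡ(k ⊗ l) = k₁ S(k₃) ⊗ (k₂ ⊗ l)`. -/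
def lcoactA : H ⊗[K] H →ₗ[K] H ⊗[K] (H ⊗[K] H) :=
  (TensorProduct.assoc K H H H).toLinearMap ∘ₗ (c1 K H).rTensor H

/-- `ρʳ(k ⊗ l) = (k ⊗ l₁) ⊗ l₂`. -/
def rcoactA : H ⊗[K] H →ₗ[K] (H ⊗[K] H) ⊗[K] H :=
  (TensorProduct.assoc K H H H).symm.toLinearMap ∘ₗ (cm K H).lTensor H

/-- `h ⊗ x ↦ h₁ x S(h₂)`. -/
def ad : H ⊗[K] H →ₗ[K] H :=
  mu K H ∘ₗ (mu K H ∘ₗ (sa K H).lTensor H ∘ₗ (TensorProduct.comm K H H).toLinearMap).lTensor H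
    ∘ₗ (TensorProduct.assoc K H H H).toLinearMap ∘ₗ (cm K H).rTensor H

/-- `h ▷ (k ⊗ l) = h₁ k S(h₂) ⊗ l`. -/
def lactB : H ⊗[K] (H ⊗[K] H) →ₗ[K] H ⊗[K] H :=
  (ad K H).rTensor H ∘ₗ (TensorProduct.assoc K H H H).symm.toLinearMap

/-- `(k ⊗ l) ◁ h = k ⊗ l h`. -/
def ractB : (H ⊗[K] H) ⊗[K] H →ₗ[K] H ⊗[K] H :=
  (mu K H).lTensor H ∘ₗ (TensorProduct.assoc K H H H).toLinearMap

/-- `ρˡ(k ⊗ l) = k₁ ⊗ (k₂ ⊗ l)`. -/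
def lcoactB : H ⊗[K] H →ₗ[K] H ⊗[K] (H ⊗[K] H) :=
  (TensorProduct.assoc K H H H).toLinearMap ∘ₗ (cm K H).rTensor H

/-- `l ↦ l₂ ⊗ S(l₁) l₃`. -/
def c2 : H →ₗ[K] H ⊗[K] H :=
  (mu K H).lTensor H ∘ₗ ((sa K H).rTensor H).lTensor H ∘ₗ (TensorProduct.assoc K H H H).toLinearMap
    ∘ₗ (TensorProduct.comm K H H).toLinearMap.rTensor H ∘ₗ (cm K H).rTensor H ∘ₗ cm K H

/-- `ρʳ(k ⊗ l) = (k ⊗ l₂) ⊗ S(l₁) l₃`. -/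
def rcoactB : H ⊗[K] H →ₗ[K] (H ⊗[K] H) ⊗[K] H :=
  (TensorProduct.assoc K H H H).symm.toLinearMap ∘ₗ (c2 K H).lTensor H

/-- The `u`-map `m ↦ m₍₋₁₎ ▷ (m₍₀₎₍₀₎ ◁ m₍₀₎₍₁₎)`; the `u`-condition says it is the identity. -/
def uMap {M : Type} [AddCommGroup M] [Module K M]
    (lact : H ⊗[K] M →ₗ[K] M) (ract : M ⊗[K] H →ₗ[K] M)
    (lcoact : M →ₗ[K] H ⊗[K] M) (rcoact : M →ₗ[K] M ⊗[K] H) : M →ₗ[K] M :=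
  lact ∘ₗ ract.lTensor H ∘ₗ rcoact.lTensor H ∘ₗ lcoact

/-! Quasitriangular structures. -/

/-- `a ⊗ b ↦ (a ⊗ 1) ⊗ b`. -/
def i13 : H ⊗[K] H →ₗ[K] (H ⊗[K] H) ⊗[K] H :=
  (Algebra.TensorProduct.includeLeft (R := K) (A := H) (B := H) (S := K)).toLinearMap.rTensor H

/-- `a ⊗ b ↦ (1 ⊗ a) ⊗ b`. -/
def i23 : H ⊗[K] H →ₗ[K] (H ⊗[K] H) ⊗[K] H :=
  (Algebra.TensorProduct.includeRight (R := K) (A := H) (B := H)).toLinearMap.rTensor H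

/-- `a ⊗ b ↦ a ⊗ (1 ⊗ b)`. -/
def j13 : H ⊗[K] H →ₗ[K] H ⊗[K] (H ⊗[K] H) :=
  (Algebra.TensorProduct.includeRight (R := K) (A := H) (B := H)).toLinearMap.lTensor H

/-- `a ⊗ b ↦ a ⊗ (b ⊗ 1)`. -/
def j12 : H ⊗[K] H →ₗ[K] H ⊗[K] (H ⊗[K] H) :=
  (Algebra.TensorProduct.includeLeft (R := K) (A := H) (B := H) (S := K)).toLinearMap.lTensor H

/-- Quasitriangular Hopf algebra (Definition 2.2, (QT1)–(QT4)). -/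
structure IsQT (R : H ⊗[K] H) : Prop where
  unit : IsUnit R
  qt1 : (cm K H).rTensor H R = i13 K H R * i23 K H R
  qt2 : (cm K H).lTensor H R = j13 K H R * j12 K H R
  qt3 : ∀ h : H, (TensorProduct.comm K H H) (cm K H h) * R = R * cm K H h
  qt4l : (TensorProduct.lid K H) ((cu K H).rTensor H R) = 1
  qt4r : (TensorProduct.rid K H) ((cu K H).lTensor H R) = 1

/-- Triangular Hopf algebra: quasitriangular with `R⁻¹ = τ(R)`. -/
structure IsTriangular (R : H ⊗[K] H) extends IsQT K H R : Prop where
  tri : R * (TensorProduct.comm K H H) R = 1 ∧ (TensorProduct.comm K H H) R * R = 1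

/-- `ρˡ(m) = R² ⊗ R¹ ▷ m`. -/
def lcoactR {M : Type} [AddCommGroup M] [Module K M]
    (lact : H ⊗[K] M →ₗ[K] M) (R : H ⊗[K] H) : M →ₗ[K] H ⊗[K] M :=
  lact.lTensor H ∘ₗ (TensorProduct.assoc K H H M).toLinearMap
    ∘ₗ TensorProduct.mk K (H ⊗[K] H) M ((TensorProduct.comm K H H) R)

/-- `ρʳ(m) = m ◁ R¹ ⊗ R²`. -/
def rcoactR {M : Type} [AddCommGroup M] [Module K M]
    (ract : M ⊗[K] H →ₗ[K] M) (R : H ⊗[K] H) : M →ₗ[K] M ⊗[K] H :=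
  ract.rTensor H ∘ₗ (TensorProduct.assoc K M H H).symm.toLinearMap
    ∘ₗ (TensorProduct.mk K M (H ⊗[K] H)).flip R

/-! Coquasitriangular structures. -/

/-- The comultiplication of the tensor-product coalgebra `H ⊗ H`. -/
def cm2 : H ⊗[K] H →ₗ[K] (H ⊗[K] H) ⊗[K] (H ⊗[K] H) :=
  (tensorTensorTensorComm K H H H H).toLinearMap ∘ₗ TensorProduct.map (cm K H) (cm K H)

/-- Convolution product on linear forms on `H ⊗ H`. -/
def conv (f g : H ⊗[K] H →ₗ[K] K) : H ⊗[K] H →ₗ[K] K :=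
  LinearMap.mul' K K ∘ₗ TensorProduct.map f g ∘ₗ cm2 K H

/-- `g ⊗ h ↦ ε(g) ε(h)`, the convolution unit. -/
def epsBoth : H ⊗[K] H →ₗ[K] K :=
  LinearMap.mul' K K ∘ₗ TensorProduct.map (cu K H) (cu K H)

/-- Coquasitriangular Hopf algebra (Definition 2.3, (CQT1)–(CQT4)). -/
structure IsCQT (z : H ⊗[K] H →ₗ[K] K) : Prop where
  inv : ∃ z' : H ⊗[K] H →ₗ[K] K, conv K H z z' = epsBoth K H ∧ conv K H z' z = epsBoth K H
  cqt1 : z ∘ₗ (mu K H).lTensor H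
      = LinearMap.mul' K K ∘ₗ TensorProduct.map z z
        ∘ₗ (tensorTensorTensorComm K H H H H).toLinearMap ∘ₗ (cm K H).rTensor (H ⊗[K] H)
  cqt2 : z ∘ₗ (mu K H).rTensor H
      = LinearMap.mul' K K ∘ₗ TensorProduct.map z z
        ∘ₗ (tensorTensorTensorComm K H H H H).toLinearMap
        ∘ₗ (TensorProduct.comm K H H).toLinearMap.lTensor (H ⊗[K] H)
        ∘ₗ (cm K H).lTensor (H ⊗[K] H)
  cqt3 : (TensorProduct.lid K H).toLinearMap
        ∘ₗ TensorProduct.map z (mu K H ∘ₗ (TensorProduct.comm K H H).toLinearMap) ∘ₗ cm2 K H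
      = (TensorProduct.rid K H).toLinearMap ∘ₗ TensorProduct.map (mu K H) z ∘ₗ cm2 K H
  cqt4 : ∀ h : H, z (h ⊗ₜ 1) = cu K H h ∧ z ((1 : H) ⊗ₜ h) = cu K H h

/-- Cotriangular Hopf algebra: coquasitriangular with
`ζ(h₁,g₁) ζ(g₂,h₂) = ε(h) ε(g)`. -/
structure IsCotriangular (z : H ⊗[K] H →ₗ[K] K) extends IsCQT K H z : Prop where
  cot : conv K H z (z ∘ₗ (TensorProduct.comm K H H).toLinearMap) = epsBoth K H

/-- `h ▷ m = ζ(h, m₍₋₁₎) m₍₀₎`. -/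
def lactZ {M : Type} [AddCommGroup M] [Module K M]
    (lcoact : M →ₗ[K] H ⊗[K] M) (z : H ⊗[K] H →ₗ[K] K) : H ⊗[K] M →ₗ[K] M :=
  (TensorProduct.lid K M).toLinearMap ∘ₗ z.rTensor M
    ∘ₗ (TensorProduct.assoc K H H M).symm.toLinearMap ∘ₗ lcoact.lTensor H

/-- `m ◁ h = m₍₀₎ ζ(h, m₍₁₎)`. -/
def ractZ {M : Type} [AddCommGroup M] [Module K M]
    (rcoact : M →ₗ[K] M ⊗[K] H) (z : H ⊗[K] H →ₗ[K] K) : M ⊗[K] H →ₗ[K] M :=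
  (TensorProduct.rid K M).toLinearMap ∘ₗ z.lTensor M
    ∘ₗ (TensorProduct.comm K H H).toLinearMap.lTensor M
    ∘ₗ (TensorProduct.assoc K M H H).toLinearMap ∘ₗ rcoact.rTensor H

end YDL

set_option synthInstance.maxHeartbeats 200000
set_option maxHeartbeats 1000000
set_option synthInstance.maxHeartbeats 1000000
set_option maxHeartbeats 2000000
namespace S7
variable (K : Type) [Field K]

section Conv
variable {C A : Type} [AddCommGroup C] [Module K C] [Ring A] [Algebra K A]
variable (Δ : C →ₗ[K] C ⊗[K] C) (ε : C →ₗ[K] K)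

def cnv (f g : C →ₗ[K] A) : C →ₗ[K] A :=
  LinearMap.mul' K A ∘ₗ TensorProduct.map f g ∘ₗ Δ

def cunit : C →ₗ[K] A := Algebra.linearMap K A ∘ₗ ε

lemma cnv_apply (f g : C →ₗ[K] A) (c : C) :
    cnv K Δ f g c = LinearMap.mul' K A (TensorProduct.map f g (Δ c)) := rfl

lemma cnv_assoc
    (hco : (TensorProduct.assoc K C C C).toLinearMap ∘ₗ Δ.rTensor C ∘ₗ Δ = Δ.lTensor C ∘ₗ Δ)
    (f g h : C →ₗ[K] A) :
    cnv K Δ (cnv K Δ f g) h = cnv K Δ f (cnv K Δ g h) := by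
  have h1 : TensorProduct.map (cnv K Δ f g) h
      = (TensorProduct.map (LinearMap.mul' K A ∘ₗ TensorProduct.map f g) h) ∘ₗ Δ.rTensor C := by
    apply TensorProduct.ext'; intro x y
    simp [cnv]
  have h2 : TensorProduct.map f (cnv K Δ g h)
      = (TensorProduct.map f (LinearMap.mul' K A ∘ₗ TensorProduct.map g h)) ∘ₗ Δ.lTensor C := by
    apply TensorProduct.ext'; intro x y
    simp [cnv]
  have h3 : LinearMap.mul' K A ∘ₗ
        TensorProduct.map (LinearMap.mul' K A ∘ₗ TensorProduct.map f g) h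
      = (LinearMap.mul' K A ∘ₗ
          TensorProduct.map f (LinearMap.mul' K A ∘ₗ TensorProduct.map g h))
        ∘ₗ (TensorProduct.assoc K C C C).toLinearMap := by
    apply TensorProduct.ext_threefold; intro x y z
    simp [mul_assoc]
  have hco' : ∀ c : C, (Δ.rTensor C) (Δ c)
      = (TensorProduct.assoc K C C C).symm ((Δ.lTensor C) (Δ c)) := by
    intro c
    have := LinearMap.congr_fun hco c
    simp only [LinearMap.comp_apply, LinearEquiv.coe_coe] at this
    rw [← this]; simp
  ext c
  simp only [cnv_apply, h1, h2, LinearMap.comp_apply, hco']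
  rw [← LinearMap.comp_apply (LinearMap.mul' K A), h3]
  simp

lemma cnv_one_left (hl : ε.rTensor C ∘ₗ Δ = TensorProduct.mk K K C 1) (f : C →ₗ[K] A) :
    cnv K Δ (cunit K ε) f = f := by
  have h1 : TensorProduct.map (cunit K ε) f
      = (TensorProduct.map (Algebra.linearMap K A) f) ∘ₗ ε.rTensor C := by
    apply TensorProduct.ext'; intro x y; simp [cunit]
  ext c
  have hl' := LinearMap.congr_fun hl c
  simp only [LinearMap.comp_apply] at hl'
  rw [cnv_apply, h1, LinearMap.comp_apply, hl']
  simp [Algebra.smul_def]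

lemma cnv_one_right (hr : ε.lTensor C ∘ₗ Δ = (TensorProduct.mk K C K).flip 1)
    (f : C →ₗ[K] A) :
    cnv K Δ f (cunit K ε) = f := by
  have h1 : TensorProduct.map f (cunit K ε)
      = (TensorProduct.map f (Algebra.linearMap K A)) ∘ₗ ε.lTensor C := by
    apply TensorProduct.ext'; intro x y; simp [cunit]
  ext c
  have hr' := LinearMap.congr_fun hr c
  simp only [LinearMap.comp_apply] at hr'
  rw [cnv_apply, h1, LinearMap.comp_apply, hr']
  simp [Algebra.smul_def, Algebra.commutes]

end Conv

section Hopf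
open Coalgebra HopfAlgebra
variable (H : Type) [Ring H] [HopfAlgebra K H]

local notation "Δ" => (Coalgebra.comul (R := K) (A := H))
local notation "εε" => (Coalgebra.counit (R := K) (A := H))
local notation "S" => (HopfAlgebra.antipode (R := K) (A := H))
local notation "μ" => (LinearMap.mul' K H)

lemma antipode_one : S (1 : H) = 1 := by
  have := mul_antipode_rTensor_comul_apply (R := K) (1 : H)
  simpa [Algebra.TensorProduct.one_def] using this

lemma cnv_S_id : cnv K Δ S LinearMap.id = cunit K εε := by
  have h : TensorProduct.map S (LinearMap.id (M := H)) = LinearMap.rTensor H S := by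
    apply TensorProduct.ext'; intro x y; simp
  rw [cnv, h, cunit]
  exact mul_antipode_rTensor_comul

lemma cnv_id_S : cnv K Δ LinearMap.id S = cunit K εε := by
  have h : TensorProduct.map (LinearMap.id (M := H)) S = LinearMap.lTensor H S := by
    apply TensorProduct.ext'; intro x y; simp
  rw [cnv, h, cunit]
  exact mul_antipode_lTensor_comul

/-- comultiplication of the tensor-square coalgebra -/
def cmm : H ⊗[K] H →ₗ[K] (H ⊗[K] H) ⊗[K] (H ⊗[K] H) :=
  (tensorTensorTensorComm K H H H H).toLinearMap ∘ₗ TensorProduct.map Δ Δ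

/-- counit of the tensor-square coalgebra -/
def epsm : H ⊗[K] H →ₗ[K] K :=
  LinearMap.mul' K K ∘ₗ TensorProduct.map εε εε

lemma cmm_tmul (x y : H) :
    cmm K H (x ⊗ₜ y) = (tensorTensorTensorComm K H H H H) ((Δ x) ⊗ₜ (Δ y)) := by
  simp [cmm]

lemma epsm_tmul (x y : H) : epsm K H (x ⊗ₜ y) = εε x * εε y := by simp [epsm]

lemma cmm_coassoc :
    (TensorProduct.assoc K (H ⊗[K] H) (H ⊗[K] H) (H ⊗[K] H)).toLinearMap
        ∘ₗ (cmm K H).rTensor (H ⊗[K] H) ∘ₗ cmm K H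
      = (cmm K H).lTensor (H ⊗[K] H) ∘ₗ cmm K H := by
  set L : ((H ⊗[K] H) ⊗[K] H) ⊗[K] ((H ⊗[K] H) ⊗[K] H) →ₗ[K]
      (H ⊗[K] H) ⊗[K] ((H ⊗[K] H) ⊗[K] (H ⊗[K] H)) :=
    (TensorProduct.assoc K (H ⊗[K] H) (H ⊗[K] H) (H ⊗[K] H)).toLinearMap
      ∘ₗ (tensorTensorTensorComm K H H H H).toLinearMap.rTensor (H ⊗[K] H)
      ∘ₗ (tensorTensorTensorComm K (H ⊗[K] H) H (H ⊗[K] H) H).toLinearMap with hL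
  set R : (H ⊗[K] (H ⊗[K] H)) ⊗[K] (H ⊗[K] (H ⊗[K] H)) →ₗ[K]
      (H ⊗[K] H) ⊗[K] ((H ⊗[K] H) ⊗[K] (H ⊗[K] H)) :=
    ((tensorTensorTensorComm K H H H H).toLinearMap).lTensor (H ⊗[K] H)
      ∘ₗ (tensorTensorTensorComm K H (H ⊗[K] H) H (H ⊗[K] H)).toLinearMap with hR
  have claimA : (TensorProduct.assoc K (H ⊗[K] H) (H ⊗[K] H) (H ⊗[K] H)).toLinearMap
        ∘ₗ (cmm K H).rTensor (H ⊗[K] H) ∘ₗ cmm K H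
      = (L ∘ₗ TensorProduct.map (LinearMap.rTensor H Δ) (LinearMap.rTensor H Δ)) ∘ₗ TensorProduct.map Δ Δ := by
    apply TensorProduct.ext'; intro x y
    simp only [LinearMap.comp_apply, map_tmul, cmm_tmul, tensorTensorTensorComm_tmul, LinearEquiv.coe_coe]
    generalize Δ x = s
    generalize Δ y = t
    induction s using TensorProduct.induction_on with
    | zero => simp
    | add u v hu hv =>
        simp only [add_tmul, tmul_add, map_add, LinearEquiv.coe_coe] at hu hv ⊢; rw [hu, hv]
    | tmul a b =>
      induction t using TensorProduct.induction_on with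
      | zero => simp
      | add u v hu hv =>
        simp only [add_tmul, tmul_add, map_add, LinearEquiv.coe_coe] at hu hv ⊢; rw [hu, hv]
      | tmul c d =>
        simp [hL, cmm_tmul]
  have claimB : (cmm K H).lTensor (H ⊗[K] H) ∘ₗ cmm K H
      = (R ∘ₗ TensorProduct.map (LinearMap.lTensor H Δ) (LinearMap.lTensor H Δ)) ∘ₗ TensorProduct.map Δ Δ := by
    apply TensorProduct.ext'; intro x y
    simp only [LinearMap.comp_apply, map_tmul, cmm_tmul, tensorTensorTensorComm_tmul, LinearEquiv.coe_coe]
    generalize Δ x = s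
    generalize Δ y = t
    induction s using TensorProduct.induction_on with
    | zero => simp
    | add u v hu hv =>
        simp only [add_tmul, tmul_add, map_add, LinearEquiv.coe_coe] at hu hv ⊢; rw [hu, hv]
    | tmul a b =>
      induction t using TensorProduct.induction_on with
      | zero => simp
      | add u v hu hv =>
        simp only [add_tmul, tmul_add, map_add, LinearEquiv.coe_coe] at hu hv ⊢; rw [hu, hv]
      | tmul c d =>
        simp [hR, cmm_tmul]
  have hD : TensorProduct.map (LinearMap.rTensor H Δ) (LinearMap.rTensor H Δ) ∘ₗ TensorProduct.map Δ Δ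
      = TensorProduct.map
          ((TensorProduct.assoc K H H H).symm.toLinearMap) ((TensorProduct.assoc K H H H).symm.toLinearMap)
        ∘ₗ TensorProduct.map (LinearMap.lTensor H Δ) (LinearMap.lTensor H Δ) ∘ₗ TensorProduct.map Δ Δ := by
    apply TensorProduct.ext'; intro x y
    simp [Coalgebra.coassoc_symm_apply]
  have hLR : L ∘ₗ TensorProduct.map
        ((TensorProduct.assoc K H H H).symm.toLinearMap) ((TensorProduct.assoc K H H H).symm.toLinearMap)
      = R := by
    apply TensorProduct.ext'; intro u v
    induction u using TensorProduct.induction_on with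
    | zero => simp
    | add a b ha hb =>
        simp only [add_tmul, tmul_add, map_add, LinearEquiv.coe_coe] at ha hb ⊢; rw [ha, hb]
    | tmul a u' =>
      induction v using TensorProduct.induction_on with
      | zero => simp
      | add a b ha hb =>
        simp only [add_tmul, tmul_add, map_add, LinearEquiv.coe_coe] at ha hb ⊢; rw [ha, hb]
      | tmul c v' =>
        induction u' using TensorProduct.induction_on with
        | zero => simp
        | add a b ha hb =>
        simp only [add_tmul, tmul_add, map_add, LinearEquiv.coe_coe] at ha hb ⊢; rw [ha, hb]
        | tmul b1 b2 =>
          induction v' using TensorProduct.induction_on with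
          | zero => simp
          | add a b ha hb =>
        simp only [add_tmul, tmul_add, map_add, LinearEquiv.coe_coe] at ha hb ⊢; rw [ha, hb]
          | tmul d1 d2 => simp [hL, hR]
  calc (TensorProduct.assoc K (H ⊗[K] H) (H ⊗[K] H) (H ⊗[K] H)).toLinearMap
        ∘ₗ (cmm K H).rTensor (H ⊗[K] H) ∘ₗ cmm K H
      = (L ∘ₗ TensorProduct.map (LinearMap.rTensor H Δ) (LinearMap.rTensor H Δ)) ∘ₗ TensorProduct.map Δ Δ := claimA
    _ = L ∘ₗ (TensorProduct.map (LinearMap.rTensor H Δ) (LinearMap.rTensor H Δ) ∘ₗ TensorProduct.map Δ Δ) := by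
        rw [LinearMap.comp_assoc]
    _ = (L ∘ₗ TensorProduct.map
          ((TensorProduct.assoc K H H H).symm.toLinearMap) ((TensorProduct.assoc K H H H).symm.toLinearMap))
        ∘ₗ TensorProduct.map (LinearMap.lTensor H Δ) (LinearMap.lTensor H Δ) ∘ₗ TensorProduct.map Δ Δ := by
        rw [hD]; simp only [LinearMap.comp_assoc]
    _ = (R ∘ₗ TensorProduct.map (LinearMap.lTensor H Δ) (LinearMap.lTensor H Δ)) ∘ₗ TensorProduct.map Δ Δ := by
        rw [hLR]; simp only [LinearMap.comp_assoc]
    _ = (cmm K H).lTensor (H ⊗[K] H) ∘ₗ cmm K H := claimB.symm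

lemma cmm_counit_left :
    LinearMap.rTensor (H ⊗[K] H) (epsm K H) ∘ₗ cmm K H
      = TensorProduct.mk K K (H ⊗[K] H) 1 := by
  apply TensorProduct.ext'; intro x y
  have helper : ∀ u v : H ⊗[K] H,
      LinearMap.rTensor (H ⊗[K] H) (epsm K H) ((tensorTensorTensorComm K H H H H) (u ⊗ₜ v))
      = (LinearMap.rTensor (H ⊗[K] H) (LinearMap.mul' K K))
          ((tensorTensorTensorComm K K H K H)
            ((LinearMap.rTensor H εε u) ⊗ₜ (LinearMap.rTensor H εε v))) := by
    intro u v
    induction u using TensorProduct.induction_on with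
    | zero => simp
    | add a b ha hb => simp only [add_tmul, map_add, LinearEquiv.coe_coe] at ha hb ⊢; rw [ha, hb]
    | tmul a b =>
      induction v using TensorProduct.induction_on with
      | zero => simp
      | add a' b' ha hb => simp only [tmul_add, map_add, LinearEquiv.coe_coe] at ha hb ⊢; rw [ha, hb]
      | tmul c d => simp [epsm_tmul]
  simp only [LinearMap.comp_apply, cmm_tmul, helper, Coalgebra.rTensor_counit_comul]
  simp

lemma cmm_counit_right :
    LinearMap.lTensor (H ⊗[K] H) (epsm K H) ∘ₗ cmm K H
      = (TensorProduct.mk K (H ⊗[K] H) K).flip 1 := by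
  apply TensorProduct.ext'; intro x y
  have helper : ∀ u v : H ⊗[K] H,
      LinearMap.lTensor (H ⊗[K] H) (epsm K H) ((tensorTensorTensorComm K H H H H) (u ⊗ₜ v))
      = (LinearMap.lTensor (H ⊗[K] H) (LinearMap.mul' K K))
          ((tensorTensorTensorComm K H K H K)
            ((LinearMap.lTensor H εε u) ⊗ₜ (LinearMap.lTensor H εε v))) := by
    intro u v
    induction u using TensorProduct.induction_on with
    | zero => simp
    | add a b ha hb => simp only [add_tmul, map_add, LinearEquiv.coe_coe] at ha hb ⊢; rw [ha, hb]
    | tmul a b =>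
      induction v using TensorProduct.induction_on with
      | zero => simp
      | add a' b' ha hb => simp only [tmul_add, map_add, LinearEquiv.coe_coe] at ha hb ⊢; rw [ha, hb]
      | tmul c d => simp [epsm_tmul]
  simp only [LinearMap.comp_apply, cmm_tmul, helper, Coalgebra.lTensor_counit_comul]
  simp

/-- `ν(a ⊗ b) = S(b) S(a)` -/
def nuMap : H ⊗[K] H →ₗ[K] H :=
  μ ∘ₗ TensorProduct.map S S ∘ₗ (TensorProduct.comm K H H).toLinearMap

lemma nuMap_tmul (a b : H) : nuMap K H (a ⊗ₜ b) = S b * S a := by simp [nuMap]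

lemma nu_conv_mul : cnv K (cmm K H) (nuMap K H) μ = cunit K (epsm K H) := by
  apply TensorProduct.ext'; intro x y
  have helper1 : ∀ (c d : H) (t : H ⊗[K] H),
      μ (TensorProduct.map (nuMap K H) μ ((tensorTensorTensorComm K H H H H) (t ⊗ₜ (c ⊗ₜ d))))
      = S c * μ (LinearMap.rTensor H S t) * d := by
    intro c d t
    induction t using TensorProduct.induction_on with
    | zero => simp
    | add a b ha hb =>
        simp only [add_tmul, map_add, LinearEquiv.coe_coe, mul_add, add_mul] at ha hb ⊢
        rw [ha, hb]
    | tmul a b => simp [nuMap_tmul, mul_assoc]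
  have helper2 : ∀ s : H ⊗[K] H,
      μ (TensorProduct.map (nuMap K H) μ ((tensorTensorTensorComm K H H H H) (Δ x ⊗ₜ s)))
      = εε x • μ (LinearMap.rTensor H S s) := by
    intro s
    induction s using TensorProduct.induction_on with
    | zero => simp
    | add a b ha hb => simp only [tmul_add, map_add, smul_add, LinearEquiv.coe_coe] at ha hb ⊢; rw [ha, hb]
    | tmul c d =>
        rw [helper1, mul_antipode_rTensor_comul_apply]
        simp [Algebra.smul_def, Algebra.commutes, mul_assoc]
  rw [cnv_apply, cmm_tmul, helper2, mul_antipode_rTensor_comul_apply]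
  simp [cunit, epsm_tmul, Algebra.smul_def]

lemma mul_conv_rho : cnv K (cmm K H) μ (S ∘ₗ μ) = cunit K (epsm K H) := by
  apply TensorProduct.ext'; intro x y
  have helper : ∀ u v : H ⊗[K] H,
      μ (TensorProduct.map μ (S ∘ₗ μ) ((tensorTensorTensorComm K H H H H) (u ⊗ₜ v)))
      = μ (LinearMap.lTensor H S (u * v)) := by
    intro u v
    induction u using TensorProduct.induction_on with
    | zero => simp
    | add a b ha hb =>
        simp only [add_tmul, map_add, add_mul, LinearEquiv.coe_coe] at ha hb ⊢; rw [ha, hb]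
    | tmul a b =>
      induction v using TensorProduct.induction_on with
      | zero => simp
      | add a' b' ha hb =>
          simp only [tmul_add, map_add, mul_add, LinearEquiv.coe_coe] at ha hb ⊢; rw [ha, hb]
      | tmul c d => simp [Algebra.TensorProduct.tmul_mul_tmul, mul_assoc]
  rw [cnv_apply, cmm_tmul, helper, ← Bialgebra.comul_mul, mul_antipode_lTensor_comul_apply]
  simp [cunit, epsm_tmul]

lemma antipode_antimul (a b : H) : S (a * b) = S b * S a := by
  have key : nuMap K H = S ∘ₗ μ := by
    calc nuMap K H = cnv K (cmm K H) (nuMap K H) (cunit K (epsm K H)) :=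
          (cnv_one_right K (cmm K H) (epsm K H) (cmm_counit_right K H) _).symm
      _ = cnv K (cmm K H) (nuMap K H) (cnv K (cmm K H) μ (S ∘ₗ μ)) := by
          rw [mul_conv_rho]
      _ = cnv K (cmm K H) (cnv K (cmm K H) (nuMap K H) μ) (S ∘ₗ μ) :=
          (cnv_assoc K (cmm K H) (cmm_coassoc K H) _ _ _).symm
      _ = cnv K (cmm K H) (cunit K (epsm K H)) (S ∘ₗ μ) := by rw [nu_conv_mul]
      _ = S ∘ₗ μ := cnv_one_left K (cmm K H) (epsm K H) (cmm_counit_left K H) _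
  have := LinearMap.congr_fun key (a ⊗ₜ[K] b)
  simpa [nuMap_tmul] using this.symm

/-- `g(k) = S(k₂) k₁` -/
def gMap : H →ₗ[K] H :=
  μ ∘ₗ LinearMap.rTensor H S ∘ₗ (TensorProduct.comm K H H).toLinearMap ∘ₗ Δ

lemma uMap_tmul_one (k : H) :
    YDL.uMap K H (YDL.lactA K H) (YDL.ractA K H) (YDL.lcoactA K H) (YDL.rcoactA K H)
        (k ⊗ₜ (1 : H))
      = (cnv K Δ LinearMap.id (gMap K H) k) ⊗ₜ (1 : H) := by
  have psi : ∀ z : H ⊗[K] H,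
      YDL.lactA K H (LinearMap.lTensor H (YDL.ractA K H)
        (LinearMap.lTensor H (YDL.rcoactA K H)
          ((TensorProduct.assoc K H H H) (z ⊗ₜ (1 : H)))))
        = μ z ⊗ₜ (1 : H) := by
    intro z
    induction z using TensorProduct.induction_on with
    | zero => simp
    | add a b ha hb => simp only [add_tmul, map_add, LinearEquiv.coe_coe] at ha hb ⊢; rw [ha, hb]
    | tmul x y =>
        simp [YDL.lactA, YDL.ractA, YDL.rcoactA, YDL.adR,
          Algebra.TensorProduct.one_def, antipode_one]
  have subhelper : ∀ (a : H) (u : H ⊗[K] H),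
      μ (LinearMap.rTensor H μ ((TensorProduct.assoc K H H H).symm (a ⊗ₜ u))) = a * μ u := by
    intro a u
    induction u using TensorProduct.induction_on with
    | zero => simp
    | add c d hc hd => simp only [tmul_add, map_add, mul_add, LinearEquiv.coe_coe] at hc hd ⊢; rw [hc, hd]
    | tmul c d => simp [mul_assoc]
  have mc1 : μ (YDL.c1 K H k) = cnv K Δ LinearMap.id (gMap K H) k := by
    have head : ∀ (a b : H),
        μ (LinearMap.rTensor H μ ((TensorProduct.assoc K H H H).symm
          (LinearMap.lTensor H (LinearMap.rTensor H S ∘ₗ (TensorProduct.comm K H H).toLinearMap)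
            (LinearMap.lTensor H Δ (a ⊗ₜ b)))))
        = a * gMap K H b := by
      intro a b
      simp only [LinearMap.lTensor_tmul, LinearMap.comp_apply, LinearEquiv.coe_coe]
      rw [subhelper]
      simp [gMap]
    have hc1 : YDL.c1 K H k
        = LinearMap.rTensor H μ ((TensorProduct.assoc K H H H).symm.toLinearMap
            ((LinearMap.lTensor H (LinearMap.rTensor H S ∘ₗ (TensorProduct.comm K H H).toLinearMap))
              ((LinearMap.lTensor H Δ) (Δ k)))) := by
      simp [YDL.c1]
    rw [hc1, cnv_apply]
    have expand : ∀ t : H ⊗[K] H,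
        μ (LinearMap.rTensor H μ ((TensorProduct.assoc K H H H).symm.toLinearMap
            ((LinearMap.lTensor H (LinearMap.rTensor H S ∘ₗ (TensorProduct.comm K H H).toLinearMap))
              ((LinearMap.lTensor H Δ) t))))
          = μ (TensorProduct.map LinearMap.id (gMap K H) t) := by
      intro t
      induction t using TensorProduct.induction_on with
      | zero => simp
      | add c d hc hd => simp only [map_add, LinearEquiv.coe_coe] at hc hd ⊢; rw [hc, hd]
      | tmul a b =>
          have := head a b
          simp only [LinearMap.lTensor_tmul, LinearMap.comp_apply, LinearEquiv.coe_coe] at this ⊢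
          rw [this]
          simp
    exact expand (Δ k)
  have hlco : YDL.lcoactA K H (k ⊗ₜ (1 : H))
      = (TensorProduct.assoc K H H H) ((YDL.c1 K H k) ⊗ₜ (1 : H)) := by
    simp [YDL.lcoactA]
  rw [YDL.uMap]
  simp only [LinearMap.comp_apply]
  rw [hlco, psi, mc1]

lemma stepA
    (hu : YDL.uMap K H (YDL.lactA K H) (YDL.ractA K H) (YDL.lcoactA K H) (YDL.rcoactA K H)
      = LinearMap.id) :
    cnv K Δ LinearMap.id (gMap K H) = LinearMap.id := by
  ext k
  have h := LinearMap.congr_fun hu (k ⊗ₜ (1 : H))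
  rw [uMap_tmul_one] at h
  have := congrArg ((TensorProduct.rid K H).toLinearMap ∘ₗ (LinearMap.lTensor H εε)) h
  simpa using this

lemma gMap_eq
    (hu : YDL.uMap K H (YDL.lactA K H) (YDL.ractA K H) (YDL.lcoactA K H) (YDL.rcoactA K H)
      = LinearMap.id) :
    gMap K H = cunit K εε := by
  have hid := stepA K H hu
  calc gMap K H = cnv K Δ (cunit K εε) (gMap K H) :=
        (cnv_one_left K Δ εε Coalgebra.rTensor_counit_comp_comul _).symm
    _ = cnv K Δ (cnv K Δ S LinearMap.id) (gMap K H) := by rw [cnv_S_id]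
    _ = cnv K Δ S (cnv K Δ LinearMap.id (gMap K H)) :=
        cnv_assoc K Δ Coalgebra.coassoc _ _ _
    _ = cnv K Δ S LinearMap.id := by rw [hid]
    _ = cunit K εε := cnv_S_id K H

lemma S_conv_SS
    (hu : YDL.uMap K H (YDL.lactA K H) (YDL.ractA K H) (YDL.lcoactA K H) (YDL.rcoactA K H)
      = LinearMap.id) :
    cnv K Δ S (S ∘ₗ S) = cunit K εε := by
  have hg := gMap_eq K H hu
  ext k
  have helper : ∀ t : H ⊗[K] H,
      μ (TensorProduct.map S (S ∘ₗ S) t)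
        = S (μ (LinearMap.rTensor H S ((TensorProduct.comm K H H) t))) := by
    intro t
    induction t using TensorProduct.induction_on with
    | zero => simp
    | add c d hc hd => simp only [map_add, LinearEquiv.coe_coe] at hc hd ⊢; rw [hc, hd]
    | tmul a b => simp [antipode_antimul]
  rw [cnv_apply, helper]
  have : μ (LinearMap.rTensor H S ((TensorProduct.comm K H H) (Δ k))) = gMap K H k := rfl
  rw [this, hg]
  simp [cunit, Algebra.algebraMap_eq_smul_one, antipode_one]

lemma SS
    (hu : YDL.uMap K H (YDL.lactA K H) (YDL.ractA K H) (YDL.lcoactA K H) (YDL.rcoactA K H)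
      = LinearMap.id) :
    (HopfAlgebra.antipode (R := K) (A := H)) ∘ₗ (HopfAlgebra.antipode (R := K) (A := H))
      = LinearMap.id := by
  calc S ∘ₗ S = cnv K Δ (cunit K εε) (S ∘ₗ S) :=
        (cnv_one_left K Δ εε Coalgebra.rTensor_counit_comp_comul _).symm
    _ = cnv K Δ (cnv K Δ LinearMap.id S) (S ∘ₗ S) := by rw [cnv_id_S]
    _ = cnv K Δ LinearMap.id (cnv K Δ S (S ∘ₗ S)) :=
        cnv_assoc K Δ Coalgebra.coassoc _ _ _
    _ = cnv K Δ LinearMap.id (cunit K εε) := by rw [S_conv_SS K H hu]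
    _ = LinearMap.id := cnv_one_right K Δ εε Coalgebra.lTensor_counit_comp_comul _

end Hopf
end S7

/-- if `H₁` satisfies the `u`-condition, then `S² = id`. -/
theorem statement7 (K : Type) [Field K] (H : Type) [Ring H] [HopfAlgebra K H]
    (hu : YDL.uMap K H (YDL.lactA K H) (YDL.ractA K H) (YDL.lcoactA K H) (YDL.rcoactA K H)
      = LinearMap.id) :
    YDL.sa K H ∘ₗ YDL.sa K H = LinearMap.id :=
  S7.SS K H hu
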